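/- For a finite graph and N : E → ℤ≥0, the number of ways to orient all edges of the multigraph G_N so that the resulting current is sourceless, squared, equals the number of ways to orient and two-color the edges of G_N so that both the red and the blue currents are sourceless: (#{∂r = 0}_N)² = #{∂r = 0, ∂b = 0}_N. -/

import Mathlib

open Finset

/-- A finite multigraph on vertex set `V`: a finite set of distinguishable
strands (edges), each with an unordered pair of distinct endpoints. -/
structure MG (V : Type) where
  Strand : Type
  [fin : Fintype Strand]
  [dec : DecidableEq Strand]
  ends : Strand → Sym2 V
  noloop : ∀ s, ¬ (ends s).IsDiag

attribute [instance] MG.fin MG.dec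

variable {V : Type} [Fintype V] [DecidableEq V]

/-- An oriented (one-colored) configuration on the multigraph `G`. -/
structure Config (G : MG V) where
  orient : G.Strand → V × V
  compat : ∀ s, Sym2.mk.uncurry (orient s) = G.ends s

/-- A two-colored oriented configuration on the multigraph `G`
(`red s = true` means the strand `s` is red, otherwise it is blue). -/
structure Config2 (G : MG V) where
  orient : G.Strand → V × V
  red : G.Strand → Bool
  compat : ∀ s, Sym2.mk.uncurry (orient s) = G.ends s

/-- The current induced by an oriented configuration. -/
def Config.cur {G : MG V} (ω : Config G) (x y : V) : ℕ :=
  (univ.filter fun s => ω.orient s = (x, y)).card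

/-- The red current of a two-colored configuration. -/
def Config2.redCur {G : MG V} (ω : Config2 G) (x y : V) : ℕ :=
  (univ.filter fun s => ω.orient s = (x, y) ∧ ω.red s = true).card

/-- The blue current of a two-colored configuration. -/
def Config2.blueCur {G : MG V} (ω : Config2 G) (x y : V) : ℕ :=
  (univ.filter fun s => ω.orient s = (x, y) ∧ ω.red s = false).card

/-- The source function of a current. -/
def csrc (n : V → V → ℕ) (x : V) : ℤ :=
  ∑ y, ((n x y : ℤ) - n y x)

/-- The bijection `F`: paint everything red keeping orientations for the first
component; reverse red strands and paint everything blue for the second. -/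
def F {G : MG V} (ω : Config2 G) : Config G × Config G :=
  (⟨ω.orient, ω.compat⟩,
   ⟨fun s => if ω.red s then (ω.orient s).swap else ω.orient s, by
      intro s
      rw [← ω.compat s]
      by_cases h : ω.red s
      · simp only [h, if_true, Function.uncurry, Prod.fst_swap, Prod.snd_swap]
        exact Sym2.eq_swap
      · simp [h]⟩)

/-- `(#{∂r = 0}_N)² = #{∂r = 0, ∂b = 0}_N`: the square of the number of
sourceless orientations of `G_N` equals the number of two-colorings and
orientations of `G_N` with both currents sourceless. -/
theorem sq_card_sourceless (G : MG V) :
    (Nat.card {ω : Config G // ∀ x, csrc ω.cur x = 0}) ^ 2 =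
      Nat.card {ω : Config2 G //
        (∀ x, csrc ω.redCur x = 0) ∧ (∀ x, csrc ω.blueCur x = 0)} := by
  have hne : ∀ (s : G.Strand) (ω : Config G), (ω.orient s).1 ≠ (ω.orient s).2 := by
    intro s ω h
    exact G.noloop s (by rw [← ω.compat s]; exact Sym2.mk_isDiag_iff.2 h)
  have hconfig_ext : ∀ (ω₁ ω₂ : Config G), ω₁.orient = ω₂.orient → ω₁ = ω₂ := by
    rintro ⟨o₁, c₁⟩ ⟨o₂, c₂⟩ h; simp_all
  have hconfig2_ext : ∀ (ω₁ ω₂ : Config2 G),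
      ω₁.orient = ω₂.orient → ω₁.red = ω₂.red → ω₁ = ω₂ := by
    rintro ⟨o₁, r₁, c₁⟩ ⟨o₂, r₂, c₂⟩ h h'; simp_all
  -- F is a bijection from Config2 to Config × Config
  let e : Config2 G ≃ Config G × Config G :=
    { toFun := F
      invFun := fun p =>
        ⟨p.1.orient, fun s => decide (p.1.orient s ≠ p.2.orient s), p.1.compat⟩
      left_inv := by
        intro ω
        apply hconfig2_ext
        · rfl
        · funext s
          simp only [F]
          by_cases h : ω.red s
          · have h2 : (ω.orient s).swap ≠ ω.orient s := by
              intro heq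
              exact hne s ⟨ω.orient, ω.compat⟩ (congrArg Prod.fst heq).symm
            simp [h, Ne.symm h2]
          · simp [h]
      right_inv := by
        rintro ⟨ω₁, ω₂⟩
        have key : ∀ s, ω₂.orient s = ω₁.orient s ∨ ω₂.orient s = (ω₁.orient s).swap := by
          intro s
          have h : s((ω₂.orient s).1, (ω₂.orient s).2) = s((ω₁.orient s).1, (ω₁.orient s).2) := by
            exact (ω₂.compat s).trans (ω₁.compat s).symm
          rcases Sym2.mk_eq_mk_iff.1 h with h' | h'
          · exact Or.inl h'
          · exact Or.inr h'
        refine Prod.ext (hconfig_ext _ _ rfl) (hconfig_ext _ _ ?_)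
        funext s
        simp only [F]
        rcases key s with h | h
        · simp [h]
        · have hns : ω₁.orient s ≠ ω₂.orient s := by
            rw [h]
            intro heq
            exact hne s ω₁ (Prod.ext_iff.1 heq.symm).1.symm
          simp [hns, h] }
  -- currents of the two components of F
  have hcur1 : ∀ (ω : Config2 G) (x y : V),
      ((F ω).1.cur x y : ℤ) = ω.redCur x y + ω.blueCur x y := by
    intro ω x y
    simp only [Config.cur, Config2.redCur, Config2.blueCur, F]
    rw [← Nat.cast_add]
    congr 1
    have h1 : (univ.filter fun s => ω.orient s = (x, y) ∧ ω.red s = true) =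
        (univ.filter fun s => ω.orient s = (x, y)).filter (fun s => ω.red s = true) := by
      rw [Finset.filter_filter]
    have h2 : (univ.filter fun s => ω.orient s = (x, y) ∧ ω.red s = false) =
        (univ.filter fun s => ω.orient s = (x, y)).filter (fun s => ¬ ω.red s = true) := by
      rw [Finset.filter_filter]
      exact Finset.filter_congr (by intro s _; simp)
    rw [h1, h2]
    exact (Finset.card_filter_add_card_filter_not (p := fun s => ω.red s = true)).symm
  have hcur2 : ∀ (ω : Config2 G) (x y : V),
      ((F ω).2.cur x y : ℤ) = ω.redCur y x + ω.blueCur x y := by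
    intro ω x y
    simp only [Config.cur, Config2.redCur, Config2.blueCur, F]
    rw [← Nat.cast_add]
    congr 1
    have hset : (univ.filter fun s =>
        (if ω.red s then (ω.orient s).swap else ω.orient s) = (x, y)) =
        (univ.filter fun s =>
          (ω.orient s = (y, x) ∧ ω.red s = true) ∨ (ω.orient s = (x, y) ∧ ω.red s = false)) := by
      apply Finset.filter_congr
      intro s _
      by_cases h : ω.red s <;>
        simp [h, Prod.ext_iff, and_comm]
    refine (congrArg Finset.card hset).trans ?_
    rw [Finset.filter_or, Finset.card_union_of_disjoint]
    rw [Finset.disjoint_left]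
    intro a ha hb
    simp only [Finset.mem_filter] at ha hb
    rw [ha.2.2] at hb
    exact absurd hb.2.2 (by simp)
  have hsrc1 : ∀ (ω : Config2 G) (x : V),
      csrc (F ω).1.cur x = csrc ω.redCur x + csrc ω.blueCur x := by
    intro ω x
    simp only [csrc, ← Finset.sum_add_distrib]
    apply Finset.sum_congr rfl
    intro y _
    rw [hcur1, hcur1]
    ring
  have hsrc2 : ∀ (ω : Config2 G) (x : V),
      csrc (F ω).2.cur x = csrc ω.blueCur x - csrc ω.redCur x := by
    intro ω x
    simp only [csrc]
    rw [← Finset.sum_sub_distrib]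
    apply Finset.sum_congr rfl
    intro y _
    rw [hcur2, hcur2]
    ring
  -- predicate correspondence
  have hpred : ∀ ω : Config2 G,
      ((∀ x, csrc ω.redCur x = 0) ∧ (∀ x, csrc ω.blueCur x = 0)) ↔
        ((∀ x, csrc (F ω).1.cur x = 0) ∧ (∀ x, csrc (F ω).2.cur x = 0)) := by
    intro ω
    constructor
    · rintro ⟨hr, hb⟩
      exact ⟨fun x => by rw [hsrc1, hr, hb, add_zero],
        fun x => by rw [hsrc2, hr, hb, sub_zero]⟩
    · rintro ⟨h1, h2⟩
      constructor <;> intro x <;>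
      · have e1 := h1 x; have e2 := h2 x
        rw [hsrc1] at e1; rw [hsrc2] at e2
        omega
  rw [sq, ← Nat.card_prod]
  symm
  apply Nat.card_congr
  exact (e.subtypeEquiv hpred).trans
    ((Equiv.subtypeProdEquivProd (p := fun ω : Config G => ∀ x, csrc ω.cur x = 0)
      (q := fun ω : Config G => ∀ x, csrc ω.cur x = 0)))
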